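/- Let Ω, N, G be nonempty finite index sets (scenarios, storage units, thermal units), let K ≥ 1, and let {0, ..., K−1} be partitioned into R nonempty clusters K_0, ..., K_{R−1} of consecutive integers ordered so that max(K_r)+1 = min(K_{r+1}). Let Δ > 0, let π_{ω,k} be real prices, let C^th_g, C^ns, C^c_n, C^d_n be real cost coefficients, let C^ref_n ≥ 0 and E^ref_n be reals, and let e_{ω,k} ≥ 0, e^ns_{ω,k}, e^s_{n,ω,k}, p^th_{g,ω,k}, p^c_{n,ω,k}, p^d_{n,ω,k} be real variables. Define the full-scale objective F := Σ_{ω∈Ω} Σ_{k=0}^{K−1} ( −π_{ω,k}·e_{ω,k} + Σ_{g∈G} C^th_g·p^th_{g,ω,k}·Δ + C^ns·e^ns_{ω,k} + Σ_{n∈N} (C^c_n·p^c_{n,ω,k} + C^d_n·p^d_{n,ω,k})·Δ ) + Σ_{n∈N} Σ_{ω∈Ω} Σ_{k=0}^{K−1} C^ref_n·(e^s_{n,ω,k} − E^ref_n)². Define aggregated variables by ē_{ω,r} := (1/|K_r|)·Σ_{k∈K_r} e_{ω,k}, ē^ns_{ω,r} := (1/|K_r|)·Σ_{k∈K_r} e^ns_{ω,k},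 ē^s_{n,ω,r} := e^s_{n,ω,min(K_r)}, p̄^th_{g,ω,r} := (1/|K_r|)·Σ_{k∈K_r} p^th_{g,ω,k}, p̄^c_{n,ω,r} := (1/|K_r|)·Σ_{k∈K_r} p^c_{n,ω,k}, p̄^d_{n,ω,r} := (1/|K_r|)·Σ_{k∈K_r} p^d_{n,ω,k}, and the aggregated objective F̄ := Σ_{ω∈Ω} Σ_{r=0}^{R−1} |K_r|·( −(max_{k∈K_r} π_{ω,k})·ē_{ω,r} + Σ_{g∈G} C^th_g·p̄^th_{g,ω,r}·Δ + C^ns·ē^ns_{ω,r} + Σ_{n∈N} (C^c_n·p̄^c_{n,ω,r} + C^d_n·p̄^d_{n,ω,r})·Δ ) + Σ_{n∈N} Σ_{ω∈Ω} Σ_{r=0}^{R−1} C^ref_n·(ē^s_{n,ω,r} − E^ref_n)². Then F̄ ≤ F. -/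

import Mathlib

lemma t_mono' {R : ℕ} {t : ℕ → ℕ} (hmono : ∀ r < R, t r < t (r + 1)) :
    ∀ i j, i ≤ j → j ≤ R → t i ≤ t j := by
  intro i j hij
  induction j, hij using Nat.le_induction with
  | base => intro _; exact le_rfl
  | succ j hij ih =>
    intro hj
    exact le_trans (ih (by omega)) (le_of_lt (hmono j (by omega)))

lemma sum_clusters' {R : ℕ} {t : ℕ → ℕ} (hmono : ∀ r < R, t r < t (r + 1)) (f : ℕ → ℝ) :
    ∑ r ∈ Finset.range R, ∑ k ∈ Finset.Ico (t r) (t (r + 1)), f k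
      = ∑ k ∈ Finset.Ico (t 0) (t R), f k := by
  induction R with
  | zero => simp
  | succ R ih =>
    rw [Finset.sum_range_succ, ih (fun r hr => hmono r (by omega)),
      Finset.sum_Ico_consecutive f (t_mono' hmono 0 R (by omega) (by omega))
        (le_of_lt (hmono R (by omega)))]


/-- The average of `f` over the contiguous cluster `K_r = {t r, ..., t (r+1) - 1}`. -/
noncomputable def clusterAvg (t : ℕ → ℕ) (r : ℕ) (f : ℕ → ℝ) : ℝ :=
  (1 / ((t (r + 1) - t r : ℕ) : ℝ)) * ∑ k ∈ Finset.Ico (t r) (t (r + 1)), f k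

/-- the aggregated objective `F̄` (cluster-wise maximum prices, cluster
cardinality weights, aggregated variables given by cluster averages, aggregated storage
states given by the state at the first time step `t r` of each cluster) is a lower bound
on the full-scale objective `F`, for any contiguous cluster partition
`K_r = {t r, ..., t (r+1) - 1}`, `r = 0, ..., R-1`, of the horizon `{0, ..., K-1}`. -/
theorem agg_objective_le_full_objective
    {Ω N G : Type*} [Fintype Ω] [Fintype N] [Fintype G]
    [Nonempty Ω] [Nonempty N] [Nonempty G]
    (K R : ℕ) (hK : 1 ≤ K)
    (t : ℕ → ℕ) (ht0 : t 0 = 0) (htR : t R = K) (hmono : ∀ r < R, t r < t (r + 1))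
    (Δ : ℝ) (hΔ : 0 < Δ)
    (π : Ω → ℕ → ℝ) (Cth : G → ℝ) (Cns : ℝ) (Cc Cd : N → ℝ)
    (Cref : N → ℝ) (hCref : ∀ n, 0 ≤ Cref n) (Eref : N → ℝ)
    (e ens : Ω → ℕ → ℝ) (es : N → Ω → ℕ → ℝ)
    (pth : G → Ω → ℕ → ℝ) (pc pd : N → Ω → ℕ → ℝ)
    (he : ∀ ω k, k < K → 0 ≤ e ω k) :
    -- F̄ ≤ F
    ((∑ ω : Ω, ∑ r : Fin R,
        ((t (r.1 + 1) - t r.1 : ℕ) : ℝ) *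
          (-(((Finset.Ico (t r.1) (t (r.1 + 1))).sup'
                (Finset.nonempty_Ico.mpr (hmono r.1 r.2)) (π ω)) * clusterAvg t r.1 (e ω))
            + (∑ g : G, Cth g * clusterAvg t r.1 (pth g ω) * Δ)
            + Cns * clusterAvg t r.1 (ens ω)
            + ∑ n : N, (Cc n * clusterAvg t r.1 (pc n ω)
                + Cd n * clusterAvg t r.1 (pd n ω)) * Δ))
      + ∑ n : N, ∑ ω : Ω, ∑ r : Fin R, Cref n * (es n ω (t r.1) - Eref n) ^ 2)
    ≤ ((∑ ω : Ω, ∑ k ∈ Finset.range K,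
        (-(π ω k) * e ω k
          + (∑ g : G, Cth g * pth g ω k * Δ)
          + Cns * ens ω k
          + ∑ n : N, (Cc n * pc n ω k + Cd n * pd n ω k) * Δ))
      + ∑ n : N, ∑ ω : Ω, ∑ k ∈ Finset.range K, Cref n * (es n ω k - Eref n) ^ 2) := by
  have hsplit : ∀ f : ℕ → ℝ, ∑ k ∈ Finset.range K, f k
      = ∑ r : Fin R, ∑ k ∈ Finset.Ico (t r.1) (t (r.1 + 1)), f k := by
    intro f
    rw [Fin.sum_univ_eq_sum_range (fun r => ∑ k ∈ Finset.Ico (t r) (t (r + 1)), f k),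
      sum_clusters' hmono, ht0, htR, Finset.range_eq_Ico]
  refine add_le_add ?_ ?_
  · refine Finset.sum_le_sum fun ω _ => ?_
    rw [hsplit]
    refine Finset.sum_le_sum fun r _ => ?_
    have hr : r.1 < R := r.2
    have hab : t r.1 < t (r.1 + 1) := hmono r.1 hr
    have hbK : t (r.1 + 1) ≤ K := htR ▸ t_mono' hmono (r.1 + 1) R hr le_rfl
    set a := t r.1 with ha
    set b := t (r.1 + 1) with hb
    set c : ℝ := ((b - a : ℕ) : ℝ) with hc
    have hc0 : c ≠ 0 := by
      rw [hc]
      exact_mod_cast Nat.sub_ne_zero_of_lt hab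
    set M : ℝ := (Finset.Ico a b).sup' (Finset.nonempty_Ico.mpr hab) (π ω) with hM
    have havg : ∀ f : ℕ → ℝ, clusterAvg t r.1 f = (1 / c) * ∑ k ∈ Finset.Ico a b, f k := by
      intro f; rfl
    have expand : ∀ q : ℕ → ℝ,
        ∑ k ∈ Finset.Ico a b,
          (-(q k) * e ω k + (∑ g : G, Cth g * pth g ω k * Δ) + Cns * ens ω k
            + ∑ n : N, (Cc n * pc n ω k + Cd n * pd n ω k) * Δ)
        = (∑ k ∈ Finset.Ico a b, -(q k) * e ω k)
          + (∑ g : G, Cth g * (∑ k ∈ Finset.Ico a b, pth g ω k) * Δ)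
          + Cns * (∑ k ∈ Finset.Ico a b, ens ω k)
          + ∑ n : N, (Cc n * (∑ k ∈ Finset.Ico a b, pc n ω k)
              + Cd n * (∑ k ∈ Finset.Ico a b, pd n ω k)) * Δ := by
      intro q
      simp only [Finset.sum_add_distrib]
      congr 1
      · congr 1
        · congr 1
          rw [Finset.sum_comm]
          refine Finset.sum_congr rfl fun g _ => ?_
          rw [← Finset.sum_mul, ← Finset.mul_sum]
        · rw [← Finset.mul_sum]
      · rw [Finset.sum_comm]
        refine Finset.sum_congr rfl fun n _ => ?_
        rw [← Finset.sum_mul, Finset.sum_add_distrib, ← Finset.mul_sum, ← Finset.mul_sum]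
    rw [expand]
    have lhs_eq :
        c * (-(M * clusterAvg t r.1 (e ω))
            + (∑ g : G, Cth g * clusterAvg t r.1 (pth g ω) * Δ)
            + Cns * clusterAvg t r.1 (ens ω)
            + ∑ n : N, (Cc n * clusterAvg t r.1 (pc n ω)
                + Cd n * clusterAvg t r.1 (pd n ω)) * Δ)
        = (∑ k ∈ Finset.Ico a b, -(M) * e ω k)
          + (∑ g : G, Cth g * (∑ k ∈ Finset.Ico a b, pth g ω k) * Δ)
          + Cns * (∑ k ∈ Finset.Ico a b, ens ω k)
          + ∑ n : N, (Cc n * (∑ k ∈ Finset.Ico a b, pc n ω k)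
              + Cd n * (∑ k ∈ Finset.Ico a b, pd n ω k)) * Δ := by
      simp only [havg]
      rw [show (∑ k ∈ Finset.Ico a b, -(M) * e ω k)
          = -(M * ((1 / c) * ∑ k ∈ Finset.Ico a b, e ω k)) * c by
        rw [← Finset.mul_sum]; field_simp]
      rw [show (∑ g : G, Cth g * ((1 / c) * ∑ k ∈ Finset.Ico a b, pth g ω k) * Δ)
          = (1 / c) * ∑ g : G, Cth g * (∑ k ∈ Finset.Ico a b, pth g ω k) * Δ by
        rw [Finset.mul_sum]; refine Finset.sum_congr rfl fun g _ => by ring]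
      rw [show (∑ n : N, (Cc n * ((1 / c) * ∑ k ∈ Finset.Ico a b, pc n ω k)
            + Cd n * ((1 / c) * ∑ k ∈ Finset.Ico a b, pd n ω k)) * Δ)
          = (1 / c) * ∑ n : N, (Cc n * (∑ k ∈ Finset.Ico a b, pc n ω k)
            + Cd n * (∑ k ∈ Finset.Ico a b, pd n ω k)) * Δ by
        rw [Finset.mul_sum]; refine Finset.sum_congr rfl fun n _ => by ring]
      field_simp
      have e1 : ∑ x : G, (Cth x * ∑ k ∈ Finset.Ico a b, pth x ω k) * Δ
          = ∑ x : G, Δ * Cth x * ∑ k ∈ Finset.Ico a b, pth x ω k :=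
        Finset.sum_congr rfl fun g _ => by ring
      rw [e1]
    rw [lhs_eq]
    gcongr with k hk
    · exact he ω k (lt_of_lt_of_le (Finset.mem_Ico.mp hk).2 hbK)
    · exact Finset.le_sup' (π ω) hk
  · refine Finset.sum_le_sum fun n _ => Finset.sum_le_sum fun ω _ => ?_
    rw [hsplit (fun k => Cref n * (es n ω k - Eref n) ^ 2)]
    refine Finset.sum_le_sum fun r _ => ?_
    refine Finset.single_le_sum (f := fun k => Cref n * (es n ω k - Eref n) ^ 2)
      (fun k _ => mul_nonneg (hCref n) (sq_nonneg _)) ?_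
    exact Finset.mem_Ico.mpr ⟨le_rfl, hmono r.1 r.2⟩
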